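/- Let π ∈ 𝒫* and suppose that for some (x,a) ∈ K the inequality P_x^π[A_0 = a] > 0 holds. Define the shifted policy δ by δ_t(·|h_t) := π_{t+1}(·| x, a, h_t) for t ∈ ℕ and h_t an admissible history. Then for every y ∈ S with p_{xy}(a) > 0: (i) P_y^δ[A_t ∈ B*(X_t)] = 1 for every t ∈ ℕ; and (ii) there exists a policy δ̃ ∈ 𝒫* with P_y^δ = P_y^{δ̃}. -/

import Mathlib

open scoped Classical BigOperators ENNReal

namespace RiskSensitive

/-- A (history-dependent, randomized) policy for a finite MDP: given the past
(chronological list of (state, action) pairs) and the current state, it assigns a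
probability weight to each action, concentrated on the admissible actions. -/
structure Policy (S A : Type*) [Fintype S] [Fintype A] (Adm : S → Finset A) where
  toFun : List (S × A) → S → A → ℝ
  nonneg : ∀ h s a, 0 ≤ toFun h s a
  sum_one : ∀ h s, ∑ a, toFun h s a = 1
  supp : ∀ h s a, a ∉ Adm s → toFun h s a = 0

variable {S A : Type*} [Fintype S] [Fintype A]
variable (Adm : S → Finset A) (p : S → A → S → ℝ) (C : S → A → ℝ) (lam : ℝ)

/-- Probability of a finite trajectory (list of (action, next-state) pairs), given the
history so far and the current state. -/
noncomputable def pathProbAux (π : Policy S A Adm) :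
    List (S × A) → S → List (A × S) → ℝ
  | _, _, [] => 1
  | hist, x, (a, y) :: rest =>
      π.toFun hist x a * p x a y * pathProbAux π (hist ++ [(x, a)]) y rest

/-- `pathProb π x l` is `P_x^π[A_0 = a_0, X_1 = y_1, …]` for `l = [(a_0,y_1),…]`. -/
noncomputable def pathProb (π : Policy S A Adm) (x : S) (l : List (A × S)) : ℝ :=
  pathProbAux Adm p π [] x l

/-- Probability of a cylinder event depending on the first `n` (action, next-state) pairs. -/
noncomputable def cylProb (π : Policy S A Adm) (x : S) (n : ℕ)
    (E : (Fin n → A × S) → Prop) : ℝ :=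
  ∑ v : Fin n → A × S, if E v then pathProb Adm p π x (List.ofFn v) else 0

/-- The state `X_t` along the trajectory encoded by `l`, starting from `x`. -/
def stateAt (x : S) (l : List (A × S)) (t : ℕ) : S :=
  (l.take t).foldl (fun _ q => q.2) x

/-- The final state of the finite trajectory `l` started at `x`. -/
def lastState (x : S) (l : List (A × S)) : S :=
  l.foldl (fun _ q => q.2) x

/-- `Σ_t w(X_t, A_t)` along the finite trajectory `l` started at `x`. -/
def costSum (w : S → A → ℝ) : S → List (A × S) → ℝ
  | _, [] => 0
  | x, (a, y) :: rest => w x a + costSum w y rest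

/-- `J_n(λ,π,x) = (1/λ) log E_x^π[exp(λ Σ_{t<n} C(X_t,A_t))]`. -/
noncomputable def Jn (π : Policy S A Adm) (x : S) (n : ℕ) : ℝ :=
  (1 / lam) * Real.log (∑ v : Fin n → A × S,
    pathProb Adm p π x (List.ofFn v) * Real.exp (lam * costSum C x (List.ofFn v)))

/-- The risk-sensitive average cost `J(λ,π,x) = limsup_n J_n(λ,π,x)/n`. -/
noncomputable def Javg (π : Policy S A Adm) (x : S) : ℝ :=
  Filter.limsup (fun n : ℕ => Jn Adm p C lam π x n / n) Filter.atTop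

/-- Optimal risk-sensitive average cost `J*(λ,x)`. -/
noncomputable def Jopt (x : S) : ℝ :=
  ⨅ π : Policy S A Adm, Javg Adm p C lam π x

/-- `π` is `ε`-optimal at `x`. -/
def EpsOptimalAt (π : Policy S A Adm) (x : S) (ε : ℝ) : Prop :=
  Javg Adm p C lam π x ≤ Jopt Adm p C lam x + ε

/-- `FirstExit Q v` : the trajectory `v` leaves `{Q}` for the first time exactly at its
last step, i.e. the exit time of `Q` equals `n`. -/
def FirstExit (Q : S → Prop) {n : ℕ} (v : Fin n → A × S) : Prop :=
  0 < n ∧ (∀ t : Fin n, (t : ℕ) + 1 < n → Q (v t).2) ∧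
    ∀ t : Fin n, (t : ℕ) + 1 = n → ¬ Q (v t).2

/-- `E_x^π[ exp(Σ_{t<τ} w(X_t,A_t)) ]` where `τ = min{n ≥ 1 : ¬ Q (X_n)}` is the first
exit time from `Q` (the contribution of `[τ = ∞]` is null when `τ < ∞` a.s.). -/
noncomputable def EexitExp (π : Policy S A Adm) (x : S) (Q : S → Prop)
    (w : S → A → ℝ) : ℝ≥0∞ :=
  ∑' n : ℕ, ∑ v : Fin n → A × S,
    if FirstExit Q v then
      ENNReal.ofReal (pathProb Adm p π x (List.ofFn v) *
        Real.exp (costSum w x (List.ofFn v)))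
    else 0

/-- `E_x^π[ exp(Σ_{t<T} w(X_t,A_t)) ]` with `T` the first positive arrival time to `z`. -/
noncomputable def EhitExp (π : Policy S A Adm) (x z : S) (w : S → A → ℝ) : ℝ≥0∞ :=
  EexitExp Adm p π x (fun y => y ≠ z) w

/-- `E_x^π[T]`, the expected first positive arrival time to `z`, computed as
`Σ_{n≥0} P_x^π[T > n]`. -/
noncomputable def ExpT (π : Policy S A Adm) (x z : S) : ℝ≥0∞ :=
  ∑' n : ℕ, ENNReal.ofReal
    (cylProb Adm p π x n (fun v => ∀ t : Fin n, (v t).2 ≠ z))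

/-- `P_x^π[T > n]`, the probability that `z` is not visited during the first `n` steps. -/
noncomputable def survProb (π : Policy S A Adm) (x z : S) (n : ℕ) : ℝ :=
  cylProb Adm p π x n (fun v => ∀ t : Fin n, (v t).2 ≠ z)

/-- The stationary policy induced by a choice function `f ∈ 𝔽`. -/
noncomputable def stationary (f : S → A) (hf : ∀ s, f s ∈ Adm s) : Policy S A Adm where
  toFun := fun _ s a => if a = f s then 1 else 0
  nonneg := by intro h s a; (try dsimp only); split <;> norm_num
  sum_one := by intro h s; simp
  supp := by
    intro h s a ha
    try dsimp only
    rw [if_neg]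
    intro hEq
    exact ha (hEq ▸ hf s)

/-- The simultaneous Doeblin condition: `E_x^f[T] ≤ M` for every state `x` and every
stationary policy `f`, where `T` is the first positive arrival time to `z`. -/
def Doeblin (z : S) (M : ℝ) : Prop :=
  0 < M ∧ ∀ (x : S) (f : S → A) (hf : ∀ s, f s ∈ Adm s),
    ExpT Adm p (stationary Adm f hf) x z ≤ ENNReal.ofReal M

/-- `B_g(x) = {a ∈ A(x) : g(x) = max{g(y) : p_{xy}(a) > 0}}`. -/
def Bg (g : S → ℝ) (x : S) : Set A :=
  {a | a ∈ Adm x ∧ g x = sSup (g '' {y | 0 < p x a y})}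

/-- The family `𝒢` of functions characterizing `J*(λ,·)`. -/
def Gclass : Set (S → ℝ) :=
  {g | (∀ x, g x = sInf ((fun a => sSup (g '' {y | 0 < p x a y})) '' (Adm x : Set A))) ∧
    ∃ h : S → ℝ, ∀ x,
      sInf ((fun a => Real.exp (lam * C x a) * ∑ y, p x a y * Real.exp (lam * h y)) ''
        Bg Adm p g x) ≤ Real.exp (lam * g x + lam * h x)}

/-- The class `𝒫*` of policies which always select actions in `B*(X_t)`. -/
def Pstar : Set (Policy S A Adm) :=
  {π | ∀ (x : S) (t : ℕ),
    cylProb Adm p π x (t + 1)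
      (fun v => (v (Fin.last t)).1 ∈
        Bg Adm p (Jopt Adm p C lam) (stateAt x (List.ofFn v) t)) = 1}

/-- The deviation function
`h(x) = inf_{π ∈ 𝒫*} (1/λ) log E_x^π[exp(λα Σ_{t<T}(C(X_t,A_t) − J*(λ,X_t)))]`. -/
noncomputable def hdev (z : S) (α : ℝ) (x : S) : EReal :=
  ⨅ π ∈ Pstar Adm p C lam, ((lam⁻¹ : ℝ) : EReal) *
    ENNReal.log (EhitExp Adm p π x z
      (fun s a => lam * α * (C s a - Jopt Adm p C lam s)))

/-- `ψ(ε) = (1/λ) inf_{δ∈𝒫*} log E_z^δ[exp(λ Σ_{t<T}(C(X_t,A_t) − γ₀ − 2ε))]`. -/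
noncomputable def psi (z : S) (ε : ℝ) : EReal :=
  ((lam⁻¹ : ℝ) : EReal) * ⨅ π ∈ Pstar Adm p C lam,
    ENNReal.log (EhitExp Adm p π z z
      (fun s a => lam * (C s a - Jopt Adm p C lam z - 2 * ε)))

/-- `ξ₀ = −(1−α) log β / (λα)`. -/
noncomputable def xi0 (α β : ℝ) : ℝ := -((1 - α) * Real.log β) / (lam * α)

/-- `ξ₁`: 1 if `J*(λ,·)` is constant, otherwise the minimum gap between distinct
values of `J*(λ,·)`. -/
noncomputable def xi1 : ℝ :=
  if ∀ u v : S, Jopt Adm p C lam u = Jopt Adm p C lam v then 1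
  else sInf {d | ∃ u v : S, Jopt Adm p C lam u < Jopt Adm p C lam v ∧
    d = Jopt Adm p C lam v - Jopt Adm p C lam u}

/-- `ξ = min{ξ₀, ξ₁}`. -/
noncomputable def xi (α β : ℝ) : ℝ := min (xi0 lam α β) (xi1 Adm p C lam)

/-- The shifted policy obtained by prefixing the fixed history `pre`. -/
def shiftPolicy (π : Policy S A Adm) (pre : List (S × A)) : Policy S A Adm where
  toFun := fun h s a => π.toFun (pre ++ h) s a
  nonneg := fun h s a => π.nonneg _ s a
  sum_one := fun h s => π.sum_one _ s
  supp := fun h s a ha => π.supp _ s a ha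

/-- The history (list of (state, action) pairs) along the trajectory `l` started at `x`. -/
def histOf : S → List (A × S) → List (S × A)
  | _, [] => []
  | x, (a, y) :: rest => (x, a) :: histOf y rest


/-! ### Auxiliary lemmas -/

lemma pathProbAux_nonneg (hp : ∀ (x : S), ∀ a ∈ Adm x, ∀ y, 0 ≤ p x a y)
    (π : Policy S A Adm) :
    ∀ (l : List (A × S)) (h : List (S × A)) (x : S), 0 ≤ pathProbAux Adm p π h x l := by
  intro l
  induction l with
  | nil => intro h x; simp [pathProbAux]
  | cons q rest ih =>
    intro h x
    obtain ⟨a, z⟩ := q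
    by_cases hA : a ∈ Adm x
    · simp only [pathProbAux]
      exact mul_nonneg (mul_nonneg (π.nonneg _ _ _) (hp x a hA z)) (ih _ _)
    · simp [pathProbAux, π.supp h x a hA]

lemma sum_pathProbAux (hp : ∀ (x : S), ∀ a ∈ Adm x, (∀ y, 0 ≤ p x a y) ∧ (∑ y, p x a y) = 1)
    (π : Policy S A Adm) :
    ∀ (n : ℕ) (h : List (S × A)) (x : S),
      ∑ v : Fin n → A × S, pathProbAux Adm p π h x (List.ofFn v) = 1 := by
  intro n
  induction n with
  | zero =>
    intro h x
    simp [List.ofFn_zero, pathProbAux]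
  | succ n ih =>
    intro h x
    have key : ∑ v : Fin (n + 1) → A × S, pathProbAux Adm p π h x (List.ofFn v)
        = ∑ q : (A × S) × (Fin n → A × S),
            π.toFun h x q.1.1 * p x q.1.1 q.1.2 *
              pathProbAux Adm p π (h ++ [(x, q.1.1)]) q.1.2 (List.ofFn q.2) := by
      apply Fintype.sum_equiv (Fin.consEquiv (fun _ : Fin (n + 1) => A × S)).symm
      intro v
      rw [List.ofFn_succ]
      rfl
    rw [key, Fintype.sum_prod_type]
    have step : ∀ q : A × S,
        (∑ v : Fin n → A × S,
          π.toFun h x q.1 * p x q.1 q.2 *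
            pathProbAux Adm p π (h ++ [(x, q.1)]) q.2 (List.ofFn v))
        = π.toFun h x q.1 * p x q.1 q.2 := by
      intro q
      rw [← Finset.mul_sum, ih, mul_one]
    calc (∑ q : (A × S), ∑ v : Fin n → A × S,
            π.toFun h x q.1 * p x q.1 q.2 *
              pathProbAux Adm p π (h ++ [(x, q.1)]) q.2 (List.ofFn v))
        = ∑ q : A × S, π.toFun h x q.1 * p x q.1 q.2 := by
          exact Finset.sum_congr rfl fun q _ => step q
      _ = ∑ a : A, ∑ z : S, π.toFun h x a * p x a z := by rw [Fintype.sum_prod_type]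
      _ = ∑ a : A, π.toFun h x a := by
          apply Finset.sum_congr rfl
          intro a _
          rw [← Finset.mul_sum]
          by_cases hA : a ∈ Adm x
          · rw [(hp x a hA).2, mul_one]
          · simp [π.supp h x a hA]
      _ = 1 := π.sum_one h x

lemma pathProbAux_append (π : Policy S A Adm) :
    ∀ (l l' : List (A × S)) (h : List (S × A)) (x : S),
      pathProbAux Adm p π h x (l ++ l') =
        pathProbAux Adm p π h x l *
          pathProbAux Adm p π (h ++ histOf x l) (lastState x l) l' := by
  intro l
  induction l with
  | nil => intro l' h x; simp [pathProbAux, histOf, lastState]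
  | cons q rest ih =>
    intro l' h x
    obtain ⟨a, z⟩ := q
    simp only [List.cons_append, pathProbAux, histOf, lastState, List.foldl_cons,
      List.append_eq]
    rw [ih, List.append_assoc]
    simp only [List.singleton_append, lastState]
    ring

lemma pathProbAux_shift (π : Policy S A Adm) (pre : List (S × A)) :
    ∀ (l : List (A × S)) (h : List (S × A)) (x : S),
      pathProbAux Adm p (shiftPolicy Adm π pre) h x l = pathProbAux Adm p π (pre ++ h) x l := by
  intro l
  induction l with
  | nil => intros; rfl
  | cons q rest ih =>
    intro h x
    obtain ⟨a, z⟩ := q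
    simp only [pathProbAux]
    rw [ih, List.append_assoc]
    rfl

lemma pathProb_eq_zero_of_cylProb_one
    (hp : ∀ (x : S), ∀ a ∈ Adm x, (∀ y, 0 ≤ p x a y) ∧ (∑ y, p x a y) = 1)
    (π : Policy S A Adm) (x : S) (n : ℕ)
    (E : (Fin n → A × S) → Prop) (hE : cylProb Adm p π x n E = 1)
    (v : Fin n → A × S) (hv : ¬ E v) : pathProb Adm p π x (List.ofFn v) = 0 := by
  have hsum : ∑ w : Fin n → A × S, pathProb Adm p π x (List.ofFn w) = 1 :=
    sum_pathProbAux Adm p hp π n [] x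
  have h2 : ∑ w : Fin n → A × S,
      (pathProb Adm p π x (List.ofFn w) -
        if E w then pathProb Adm p π x (List.ofFn w) else 0) = 0 := by
    rw [Finset.sum_sub_distrib, hsum]
    have : cylProb Adm p π x n E = ∑ w : Fin n → A × S,
        if E w then pathProb Adm p π x (List.ofFn w) else 0 := rfl
    rw [← this, hE, sub_self]
  have h3 := (Finset.sum_eq_zero_iff_of_nonneg ?_).mp h2 v (Finset.mem_univ v)
  · rw [if_neg hv, sub_zero] at h3
    exact h3
  · intro w _
    by_cases hw : E w
    · simp [hw]
    · simp only [if_neg hw, sub_zero]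
      exact pathProbAux_nonneg Adm p (fun s b hb => (hp s b hb).1) π _ _ _

lemma actions_mem (π : Policy S A Adm) (G : S → Set A)
    (hG : ∀ h s b, π.toFun h s b ≠ 0 → b ∈ G s) :
    ∀ (l : List (A × S)) (h : List (S × A)) (x : S),
      pathProbAux Adm p π h x l ≠ 0 →
      ∀ (t : ℕ) (ht : t < l.length), (l.get ⟨t, ht⟩).1 ∈ G (stateAt x l t) := by
  intro l
  induction l with
  | nil => intro h x _ t ht; simp at ht
  | cons q rest ih =>
    intro h x hne t ht
    obtain ⟨a, z⟩ := q
    simp only [pathProbAux] at hne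
    have h1 : π.toFun h x a ≠ 0 := fun h' => hne (by rw [h']; ring)
    have h3 : pathProbAux Adm p π (h ++ [(x, a)]) z rest ≠ 0 :=
      fun h' => hne (by rw [h']; ring)
    cases t with
    | zero => simpa [stateAt] using hG h x a h1
    | succ k =>
      have hk : k < rest.length := by simpa using ht
      have := ih (h ++ [(x, a)]) z h3 k hk
      simpa [stateAt, List.take_succ_cons] using this

lemma ofFn_get' {α : Type*} (l : List α) {n : ℕ} (h : l.length = n) :
    List.ofFn (fun i : Fin n => l.get (Fin.cast h.symm i)) = l := by
  apply List.ext_get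
  · simp [h]
  · intro i h1 h2
    simp [List.get_ofFn]

lemma stateAt_append_length (y : S) (l l' : List (A × S)) :
    stateAt y (l ++ l') l.length = lastState y l := by
  unfold stateAt lastState
  rw [List.take_left]

/-- The patching of a policy: follow `δ` whenever it is concentrated on `G`, otherwise
play the fixed action `b`. -/
noncomputable def patchPolicy (G : S → Set A) (b : S → A) (hbA : ∀ s, b s ∈ Adm s)
    (δ : Policy S A Adm) : Policy S A Adm where
  toFun h s c := if (∀ a', a' ∉ G s → δ.toFun h s a' = 0) then δ.toFun h s c
    else if c = b s then 1 else 0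
  nonneg := by
    intro h s c
    split
    · exact δ.nonneg _ _ _
    · split <;> norm_num
  sum_one := by
    intro h s
    split
    · exact δ.sum_one _ _
    · simp
  supp := by
    intro h s c hc
    split
    · exact δ.supp _ _ _ hc
    · rw [if_neg]
      rintro rfl
      exact hc (hbA s)

lemma patchPolicy_mem (G : S → Set A) (b : S → A) (hbA : ∀ s, b s ∈ Adm s)
    (hbG : ∀ s, b s ∈ G s) (δ : Policy S A Adm) :
    ∀ h s c, (patchPolicy Adm G b hbA δ).toFun h s c ≠ 0 → c ∈ G s := by
  intro h s c hc
  simp only [patchPolicy] at hc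
  by_cases hcond : ∀ a', a' ∉ G s → δ.toFun h s a' = 0
  · rw [if_pos hcond] at hc
    by_contra hcG
    exact hc (hcond c hcG)
  · rw [if_neg hcond] at hc
    by_cases hcb : c = b s
    · rw [hcb]; exact hbG s
    · exact absurd rfl (by rwa [if_neg hcb] at hc)

lemma lastState_append (x : S) (l l' : List (A × S)) :
    lastState x (l ++ l') = lastState (lastState x l) l' := by
  unfold lastState
  rw [List.foldl_append]

lemma histOf_append :
    ∀ (l l' : List (A × S)) (x : S),
      histOf x (l ++ l') = histOf x l ++ histOf (lastState x l) l' := by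
  intro l
  induction l with
  | nil => intro l' x; simp [histOf, lastState]
  | cons q rest ih =>
    intro l' x
    obtain ⟨a, z⟩ := q
    simp only [List.cons_append, histOf, lastState, List.foldl_cons, List.append_eq]
    rw [ih]
    rfl

/-- if `π ∈ 𝒫*` and `P_x^π[A_0 = a] > 0`, then for every `y` with
`p_{xy}(a) > 0` the shifted policy `δ` selects actions in `B*(X_t)` a.s. under `P_y^δ`,
and there is `δ̃ ∈ 𝒫*` with `P_y^δ = P_y^{δ̃}`. -/
theorem shifted_policy_in_Pstar
    (hA : ∀ x, (Adm x).Nonempty)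
    (hp : ∀ (x : S), ∀ a ∈ Adm x, (∀ y, 0 ≤ p x a y) ∧ (∑ y, p x a y) = 1)
    (hlam : 0 < lam)
    (π : Policy S A Adm) (hπ : π ∈ Pstar Adm p C lam)
    (x : S) (a : A) (ha : a ∈ Adm x)
    (h0 : 0 < cylProb Adm p π x 1 (fun v => (v 0).1 = a))
    (y : S) (hy : 0 < p x a y) :
    (∀ t : ℕ, cylProb Adm p (shiftPolicy Adm π [(x, a)]) y (t + 1)
      (fun v => (v (Fin.last t)).1 ∈
        Bg Adm p (Jopt Adm p C lam) (stateAt y (List.ofFn v) t)) = 1) ∧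
    ∃ δ' ∈ Pstar Adm p C lam, ∀ l : List (A × S),
      pathProb Adm p (shiftPolicy Adm π [(x, a)]) y l = pathProb Adm p δ' y l := by
  classical
  set δ := shiftPolicy Adm π [(x, a)] with hδdef
  -- relation between `δ`-probabilities and `π`-probabilities
  have hδshift : ∀ l : List (A × S),
      pathProb Adm p δ y l = pathProbAux Adm p π [(x, a)] y l := by
    intro l
    unfold pathProb
    rw [hδdef, pathProbAux_shift, List.append_nil]
  -- Step A : π assigns positive probability to `a` at time 0
  have hπa : π.toFun [] x a ≠ 0 := by
    have hne : (∑ v : Fin 1 → A × S,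
        if (v 0).1 = a then pathProb Adm p π x (List.ofFn v) else 0) ≠ 0 := ne_of_gt h0
    obtain ⟨v, _, hv⟩ := Finset.exists_ne_zero_of_sum_ne_zero hne
    by_cases hEv : (v 0).1 = a
    · rw [if_pos hEv] at hv
      have hofn : List.ofFn v = [v 0] := by
        rw [List.ofFn_succ, List.ofFn_zero]
      rw [hofn] at hv
      rcases hq : v 0 with ⟨c, z⟩
      rw [hq] at hv hEv
      subst hEv
      intro h
      apply hv
      simp [pathProb, pathProbAux, h]
    · rw [if_neg hEv] at hv
      exact absurd rfl hv
  have hc : π.toFun [] x a * p x a y ≠ 0 := mul_ne_zero hπa (ne_of_gt hy)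
  -- core : bad trajectories have zero probability under δ
  have hbad : ∀ (t : ℕ) (v : Fin (t + 1) → A × S),
      (v (Fin.last t)).1 ∉ Bg Adm p (Jopt Adm p C lam) (stateAt y (List.ofFn v) t) →
      pathProb Adm p δ y (List.ofFn v) = 0 := by
    intro t v hv
    have hcyl := hπ x (t + 1)
    have e2 : List.ofFn (Fin.cons (a, y) v : Fin (t + 2) → A × S)
        = (a, y) :: List.ofFn v := by
      simp [List.ofFn_succ]
    have hw : ¬ (((Fin.cons (a, y) v : Fin (t + 2) → A × S) (Fin.last (t + 1))).1 ∈
        Bg Adm p (Jopt Adm p C lam)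
          (stateAt x (List.ofFn (Fin.cons (a, y) v : Fin (t + 2) → A × S)) (t + 1))) := by
      have e1 : (Fin.cons (a, y) v : Fin (t + 2) → A × S) (Fin.last (t + 1))
          = v (Fin.last t) := by
        rw [← Fin.succ_last, Fin.cons_succ]
      rw [e1, e2]
      have e3 : stateAt x ((a, y) :: List.ofFn v) (t + 1) = stateAt y (List.ofFn v) t := rfl
      rw [e3]
      exact hv
    have hzero := pathProb_eq_zero_of_cylProb_one Adm p hp π x (t + 2) _ hcyl _ hw
    rw [e2] at hzero
    have hzero' : π.toFun [] x a * p x a y * pathProbAux Adm p π [(x, a)] y (List.ofFn v)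
        = 0 := hzero
    rw [hδshift]
    rcases mul_eq_zero.mp hzero' with h | h
    · exact absurd h hc
    · exact h
  -- part (i)
  have part1 : ∀ t : ℕ, cylProb Adm p δ y (t + 1)
      (fun v => (v (Fin.last t)).1 ∈
        Bg Adm p (Jopt Adm p C lam) (stateAt y (List.ofFn v) t)) = 1 := by
    intro t
    have hcongr : cylProb Adm p δ y (t + 1)
        (fun v => (v (Fin.last t)).1 ∈
          Bg Adm p (Jopt Adm p C lam) (stateAt y (List.ofFn v) t))
        = ∑ v : Fin (t + 1) → A × S, pathProb Adm p δ y (List.ofFn v) := by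
      apply Finset.sum_congr rfl
      intro v _
      by_cases hEv : (v (Fin.last t)).1 ∈
          Bg Adm p (Jopt Adm p C lam) (stateAt y (List.ofFn v) t)
      · rw [if_pos hEv]
      · rw [if_neg hEv, hbad t v hEv]
    rw [hcongr]
    exact sum_pathProbAux Adm p hp δ (t + 1) [] y
  refine ⟨part1, ?_⟩
  -- nonemptiness of B*(s) for every state s
  have hBgne : ∀ s : S, ∃ c : A, c ∈ Bg Adm p (Jopt Adm p C lam) s := by
    intro s
    have hcyl := hπ s 0
    have hne : cylProb Adm p π s 1
        (fun v => (v (Fin.last 0)).1 ∈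
          Bg Adm p (Jopt Adm p C lam) (stateAt s (List.ofFn v) 0)) ≠ 0 := by
      rw [hcyl]; norm_num
    unfold cylProb at hne
    obtain ⟨v, _, hv⟩ := Finset.exists_ne_zero_of_sum_ne_zero hne
    by_cases hEv : (v (Fin.last 0)).1 ∈
        Bg Adm p (Jopt Adm p C lam) (stateAt s (List.ofFn v) 0)
    · exact ⟨(v (Fin.last 0)).1, hEv⟩
    · rw [if_neg hEv] at hv
      exact absurd rfl hv
  choose b hb using hBgne
  have hbA : ∀ s, b s ∈ Adm s := fun s => (hb s).1
  refine ⟨patchPolicy Adm (Bg Adm p (Jopt Adm p C lam)) b hbA δ, ?_, ?_⟩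
  · -- the patched policy belongs to 𝒫*
    intro x' t
    have hmem := patchPolicy_mem Adm (Bg Adm p (Jopt Adm p C lam)) b hbA hb δ
    have hcongr : cylProb Adm p (patchPolicy Adm (Bg Adm p (Jopt Adm p C lam)) b hbA δ)
        x' (t + 1)
        (fun v => (v (Fin.last t)).1 ∈
          Bg Adm p (Jopt Adm p C lam) (stateAt x' (List.ofFn v) t))
        = ∑ v : Fin (t + 1) → A × S,
            pathProb Adm p (patchPolicy Adm (Bg Adm p (Jopt Adm p C lam)) b hbA δ) x'
              (List.ofFn v) := by
      apply Finset.sum_congr rfl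
      intro v _
      by_cases hEv : (v (Fin.last t)).1 ∈
          Bg Adm p (Jopt Adm p C lam) (stateAt x' (List.ofFn v) t)
      · rw [if_pos hEv]
      · rw [if_neg hEv]
        by_contra hne
        apply hEv
        have hlt : t < (List.ofFn v).length := by simp
        have := actions_mem Adm p
          (patchPolicy Adm (Bg Adm p (Jopt Adm p C lam)) b hbA δ)
          (Bg Adm p (Jopt Adm p C lam)) hmem (List.ofFn v) [] x'
          (fun h => hne h.symm) t hlt
        have hget : ((List.ofFn v).get ⟨t, hlt⟩).1 = (v (Fin.last t)).1 := by
          rw [List.get_ofFn]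
          rfl
        rwa [hget] at this
    rw [hcongr]
    exact sum_pathProbAux Adm p hp _ (t + 1) [] x'
  · -- equality of path probabilities
    have main : ∀ (l l₀ : List (A × S)), pathProb Adm p δ y l₀ ≠ 0 →
        pathProbAux Adm p (patchPolicy Adm (Bg Adm p (Jopt Adm p C lam)) b hbA δ)
            (histOf y l₀) (lastState y l₀) l
          = pathProbAux Adm p δ (histOf y l₀) (lastState y l₀) l := by
      intro l
      induction l with
      | nil => intros; rfl
      | cons q rest ih =>
        intro l₀ h₀
        obtain ⟨a', z⟩ := q
        have hcond : ∀ c, c ∉ Bg Adm p (Jopt Adm p C lam) (lastState y l₀) →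
            δ.toFun (histOf y l₀) (lastState y l₀) c = 0 := by
          intro c hcG
          by_contra hne
          have hAdm : c ∈ Adm (lastState y l₀) := by
            by_contra hA
            exact hne (δ.supp _ _ _ hA)
          obtain ⟨z', _, hz'⟩ := Finset.exists_ne_zero_of_sum_ne_zero
            (f := fun z' => p (lastState y l₀) c z')
            (by rw [(hp _ c hAdm).2]; norm_num)
          have hpp : pathProb Adm p δ y (l₀ ++ [(c, z')]) ≠ 0 := by
            unfold pathProb
            rw [pathProbAux_append]
            simp only [List.nil_append, pathProbAux, mul_one]
            exact mul_ne_zero h₀ (mul_ne_zero hne hz')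
          apply hpp
          have hlen : (l₀ ++ [(c, z')]).length = l₀.length + 1 := by simp
          have hofn := ofFn_get' (l₀ ++ [(c, z')]) hlen
          rw [← hofn]
          apply hbad
          have hlast : (l₀ ++ [(c, z')]).get (Fin.cast hlen.symm (Fin.last l₀.length))
              = (c, z') := by
            simp [List.get_eq_getElem, List.getElem_concat_length]
          rw [hlast, hofn, stateAt_append_length]
          exact hcG
        have hpatch : (patchPolicy Adm (Bg Adm p (Jopt Adm p C lam)) b hbA δ).toFun
            (histOf y l₀) (lastState y l₀) a'
            = δ.toFun (histOf y l₀) (lastState y l₀) a' := by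
          simp only [patchPolicy]
          rw [if_pos hcond]
        simp only [pathProbAux]
        rw [hpatch]
        by_cases hstep : δ.toFun (histOf y l₀) (lastState y l₀) a'
            * p (lastState y l₀) a' z = 0
        · rcases mul_eq_zero.mp hstep with h | h <;> simp [h]
        · have h₀' : pathProb Adm p δ y (l₀ ++ [(a', z)]) ≠ 0 := by
            unfold pathProb
            rw [pathProbAux_append]
            simp only [List.nil_append, pathProbAux, mul_one]
            exact mul_ne_zero h₀ hstep
          have hrec := ih (l₀ ++ [(a', z)]) h₀'
          rw [histOf_append, lastState_append] at hrec
          have e4 : histOf (lastState y l₀) ([(a', z)] : List (A × S))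
              = [(lastState y l₀, a')] := rfl
          have e5 : lastState (lastState y l₀) ([(a', z)] : List (A × S)) = z := rfl
          rw [e4, e5] at hrec
          rw [hrec]
    intro l
    have h1 : pathProb Adm p δ y [] ≠ 0 := one_ne_zero
    have := main l [] h1
    simp only [histOf, lastState, List.foldl_nil] at this
    exact this.symm

end RiskSensitive
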